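/- Let λ > 0, let X₁,…,X_m ∈ R^d be vectors in the unit ball, and let V := Σ_{s=1}^m X_s X_sᵀ. Then log(det(λI + V)/λ^d) ≤ d log(1 + m/(λd)). -/

import Mathlib

open Matrix Real Finset

set_option maxHeartbeats 1000000

lemma psd_vecMulVec' {d : ℕ} (x : Fin d → ℝ) : (vecMulVec x x).PosSemidef := by
  have h : vecMulVec x x = (Matrix.replicateRow Unit x)ᴴ * (Matrix.replicateRow Unit x) := by
    ext i j
    simp [vecMulVec_apply, Matrix.mul_apply, mul_comm]
  rw [h]
  exact posSemidef_conjTranspose_mul_self _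

lemma trace_eq_sum_eigenvalues' {n : Type*} [Fintype n] [DecidableEq n]
    {A : Matrix n n ℝ} (hA : A.IsHermitian) :
    A.trace = ∑ i, hA.eigenvalues i := by
  nth_rewrite 1 [hA.spectral_theorem]
  rw [Unitary.conjStarAlgAut_apply, Matrix.trace_mul_cycle,
    (Matrix.mem_unitaryGroup_iff').mp (hA.eigenvectorUnitary).2, Matrix.one_mul,
    Matrix.trace_diagonal]
  simp

/-- Determinant–trace inequality: if `X₁,…,X_m` lie in the unit ball and
`V = ∑ s, X_s X_sᵀ`, then `log(det(λI + V)/λ^d) ≤ d log(1 + m/(λd))`. -/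
theorem stmt10 {d m : ℕ} (lam : ℝ) (hlam : 0 < lam)
    (X : Fin m → Fin d → ℝ) (hX : ∀ s, ∑ i, X s i ^ 2 ≤ 1) :
    Real.log
        ((lam • (1 : Matrix (Fin d) (Fin d) ℝ) + ∑ s, vecMulVec (X s) (X s)).det / lam ^ d) ≤
      d * Real.log (1 + m / (lam * d)) := by
  rcases Nat.eq_zero_or_pos d with hd | hd
  · subst hd
    simp [Matrix.det_fin_zero]
  have hdR : (0 : ℝ) < d := by exact_mod_cast hd
  set V : Matrix (Fin d) (Fin d) ℝ := ∑ s, vecMulVec (X s) (X s) with hVdef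
  have hVpsd : V.PosSemidef := by
    rw [hVdef]
    apply Finset.sum_induction _ _ (fun a b ha hb => ha.add hb) Matrix.PosSemidef.zero
    intro s _
    exact psd_vecMulVec' (X s)
  have hIpd : (lam • (1 : Matrix (Fin d) (Fin d) ℝ)).PosDef := by
    have : lam • (1 : Matrix (Fin d) (Fin d) ℝ) = Matrix.diagonal (fun _ => lam) := by
      ext i j; simp [Matrix.diagonal, Matrix.one_apply]
    rw [this]
    exact Matrix.posDef_diagonal_iff.mpr (fun _ => hlam)
  set M : Matrix (Fin d) (Fin d) ℝ := lam • (1 : Matrix (Fin d) (Fin d) ℝ) + V with hMdef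
  have hMpd : M.PosDef := hIpd.add_posSemidef hVpsd
  have hH := hMpd.isHermitian
  set μ : Fin d → ℝ := hH.eigenvalues with hμ
  have hμpos : ∀ i, 0 < μ i := fun i => hMpd.eigenvalues_pos i
  -- trace bound
  have htr : M.trace ≤ lam * d + m := by
    have h1 : M.trace = lam * d + ∑ s, ∑ i, X s i ^ 2 := by
      rw [hMdef, Matrix.trace_add, Matrix.trace_smul, Matrix.trace_one, hVdef,
        Matrix.trace_sum]
      congr 1
      · simp [mul_comm]
      · refine Finset.sum_congr rfl fun s _ => ?_
        simp [Matrix.trace, Matrix.diag, vecMulVec_apply, sq]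
    rw [h1]
    gcongr
    calc ∑ s, ∑ i, X s i ^ 2 ≤ ∑ s : Fin m, (1 : ℝ) := by
          exact Finset.sum_le_sum fun s _ => hX s
      _ = m := by simp
  have htr' : M.trace = ∑ i, μ i := trace_eq_sum_eigenvalues' hH
  -- AM-GM
  have hamgm : ∏ i, μ i ≤ ((lam * d + m) / d) ^ d := by
    have h := Real.geom_mean_le_arith_mean_weighted Finset.univ
      (fun _ : Fin d => 1 / (d : ℝ)) μ (fun i _ => by positivity)
      (by simp; field_simp) (fun i _ => (hμpos i).le)
    have hprod : ∏ i : Fin d, μ i ^ (1 / (d:ℝ)) = (∏ i, μ i) ^ (1 / (d:ℝ)) := by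
      rw [← Real.finset_prod_rpow _ _ (fun i _ => (hμpos i).le)]
    rw [hprod] at h
    have hsum : ∑ i : Fin d, 1 / (d:ℝ) * μ i = (∑ i, μ i) / d := by
      rw [← Finset.mul_sum]; ring
    rw [hsum] at h
    have hP : (0:ℝ) < ∏ i, μ i := Finset.prod_pos fun i _ => hμpos i
    have h2 : ((∏ i, μ i) ^ (1 / (d:ℝ))) ^ (d:ℕ) ≤ ((∑ i, μ i) / d) ^ (d:ℕ) := by
      apply pow_le_pow_left₀ (Real.rpow_nonneg hP.le _) h
    rw [← Real.rpow_natCast ((∏ i, μ i) ^ (1 / (d:ℝ))), ← Real.rpow_mul hP.le] at h2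
    rw [one_div, inv_mul_cancel₀ (by exact_mod_cast hd.ne' : (d:ℝ) ≠ 0), Real.rpow_one] at h2
    calc ∏ i, μ i ≤ ((∑ i, μ i) / d) ^ (d:ℕ) := h2
      _ ≤ ((lam * d + m) / d) ^ d := by
          have hs : 0 ≤ ∑ i, μ i := Finset.sum_nonneg fun i _ => (hμpos i).le
          apply pow_le_pow_left₀ (by positivity)
          gcongr
          rw [← htr']; exact htr
  have hdetpos : 0 < M.det := hMpd.det_pos
  have hdet : M.det = ∏ i, μ i := by
    have := hH.det_eq_prod_eigenvalues
    simpa using this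
  -- combine logs
  have hrhs : (1:ℝ) + m / (lam * d) = ((lam * d + m) / d) / lam := by
    have h1 : lam * (d:ℝ) ≠ 0 := by positivity
    rw [div_div, mul_comm (d:ℝ) lam, add_div, div_self h1]
  have hbase : (0:ℝ) < (lam * d + m) / d := by positivity
  have hlog : Real.log (M.det / lam ^ d) ≤ d * Real.log (((lam * d + m) / d) / lam) := by
    rw [Real.log_div hdetpos.ne' (by positivity), Real.log_div hbase.ne' hlam.ne',
      Real.log_pow]
    have h1 : Real.log M.det ≤ d * Real.log ((lam * d + m) / d) := by
      calc Real.log M.det ≤ Real.log (((lam * d + m) / d) ^ d) := by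
            apply Real.log_le_log hdetpos
            rw [hdet]; exact hamgm
        _ = d * Real.log ((lam * d + m) / d) := by rw [Real.log_pow]
      
    nlinarith [h1]
  rw [hrhs]
  exact hlog
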